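/- Let ω = e^{2πi/11} and let ψ act ℂ-linearly on polynomials in x₀, ..., x₅ by x₀ ↦ x₀, x₁ ↦ ωx₁, x₂ ↦ ω³x₂, x₃ ↦ ω⁴x₃, x₄ ↦ ω⁵x₄, x₅ ↦ ω⁹x₅. Then a homogeneous polynomial f of degree 3 in ℂ[x₀,...,x₅] satisfies ψ(f) = f if and only if f lies in the ℂ-linear span of the six monomials x₀³, x₁²x₅, x₂²x₄, x₃²x₂, x₄²x₁, x₅²x₃. -/

import Mathlib

open MvPolynomial

/-!
The cubics invariant under the order 11 substitution
`ψ : xᵢ ↦ ω^{kᵢ} xᵢ` with `ω = e^{2πi/11}` and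
`(k₀,…,k₅) = (0,1,3,4,5,9)` are exactly the linear span of
`x₀³, x₁²x₅, x₂²x₄, x₃²x₂, x₄²x₁, x₅²x₃`.
-/

/-- `ω = e^{2πi/11}`, a primitive 11-th root of unity. -/
noncomputable def ω : ℂ := Complex.exp (2 * Real.pi * Complex.I / 11)

/-- The substitution automorphism
`ψ : x₀ ↦ x₀, x₁ ↦ ωx₁, x₂ ↦ ω³x₂, x₃ ↦ ω⁴x₃, x₄ ↦ ω⁵x₄, x₅ ↦ ω⁹x₅`
of `ℂ[x₀,…,x₅]`. -/
noncomputable def ψ : MvPolynomial (Fin 6) ℂ →ₐ[ℂ] MvPolynomial (Fin 6) ℂ :=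
  aeval fun i : Fin 6 => C (ω ^ (![0, 1, 3, 4, 5, 9] i : ℕ)) * X i

lemma omega_prim : IsPrimitiveRoot ω 11 := Complex.isPrimitiveRoot_exp 11 (by norm_num)

/-- The weight of an exponent vector. -/
def w (d : Fin 6 →₀ ℕ) : ℕ := ∑ i, (![0, 1, 3, 4, 5, 9] i : ℕ) * d i

lemma w_eq (d : Fin 6 →₀ ℕ) : w d = d 1 + 3 * d 2 + 4 * d 3 + 5 * d 4 + 9 * d 5 := by
  rw [w, Fin.sum_univ_six]
  norm_num [Matrix.cons_val_succ]
  rfl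

lemma psi_monomial (d : Fin 6 →₀ ℕ) (c : ℂ) :
    ψ (monomial d c) = monomial d (ω ^ w d * c) := by
  rw [ψ, aeval_monomial]
  rw [Finsupp.prod_fintype _ _ (fun i => by simp)]
  simp only [mul_pow, ← C_pow, ← pow_mul, Finset.prod_mul_distrib, ← map_prod,
    Finset.prod_pow_eq_pow_sum]
  rw [← w, monomial_eq, Finsupp.prod_fintype _ _ (fun i => by simp), algebraMap_eq, map_mul]
  ring

lemma coeff_psi (d : Fin 6 →₀ ℕ) (f : MvPolynomial (Fin 6) ℂ) :
    coeff d (ψ f) = ω ^ w d * coeff d f := by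
  conv_lhs => rw [f.as_sum]
  rw [map_sum]
  simp only [psi_monomial, coeff_sum, coeff_monomial]
  rw [Finset.sum_ite_eq' f.support d]
  split_ifs with h
  · rfl
  · simp [notMem_support_iff.mp h]

set_option maxHeartbeats 1600000 in
lemma solve_nat (d0 d1 d2 d3 d4 d5 : ℕ) (h3 : d0+d1+d2+d3+d4+d5 = 3)
    (h11 : 11 ∣ d1+3*d2+4*d3+5*d4+9*d5) :
    (d0 = 3 ∧ d1 = 0 ∧ d2 = 0 ∧ d3 = 0 ∧ d4 = 0 ∧ d5 = 0) ∨
    (d0 = 0 ∧ d1 = 2 ∧ d2 = 0 ∧ d3 = 0 ∧ d4 = 0 ∧ d5 = 1) ∨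
    (d0 = 0 ∧ d1 = 0 ∧ d2 = 2 ∧ d3 = 0 ∧ d4 = 1 ∧ d5 = 0) ∨
    (d0 = 0 ∧ d1 = 0 ∧ d2 = 1 ∧ d3 = 2 ∧ d4 = 0 ∧ d5 = 0) ∨
    (d0 = 0 ∧ d1 = 1 ∧ d2 = 0 ∧ d3 = 0 ∧ d4 = 2 ∧ d5 = 0) ∨
    (d0 = 0 ∧ d1 = 0 ∧ d2 = 0 ∧ d3 = 1 ∧ d4 = 0 ∧ d5 = 2) := by
  have h5 : d5 ≤ 3 := by omega
  have h4 : d4 ≤ 3 := by omega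
  have h3' : d3 ≤ 3 := by omega
  have h2 : d2 ≤ 3 := by omega
  interval_cases d5 <;> interval_cases d4 <;> interval_cases d3 <;> interval_cases d2 <;> omega

lemma classify (d : Fin 6 →₀ ℕ) (h3 : ∑ i, d i = 3) (h11 : 11 ∣ w d) :
    d = Finsupp.single 0 3 ∨ d = Finsupp.single 1 2 + Finsupp.single 5 1 ∨
    d = Finsupp.single 2 2 + Finsupp.single 4 1 ∨ d = Finsupp.single 3 2 + Finsupp.single 2 1 ∨
    d = Finsupp.single 4 2 + Finsupp.single 1 1 ∨ d = Finsupp.single 5 2 + Finsupp.single 3 1 := by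
  rw [Fin.sum_univ_six] at h3
  rw [w_eq] at h11
  have key := solve_nat (d 0) (d 1) (d 2) (d 3) (d 4) (d 5) h3 h11
  obtain ⟨h0, h1, h2', h3', h4, h5⟩ | ⟨h0, h1, h2', h3', h4, h5⟩ | ⟨h0, h1, h2', h3', h4, h5⟩ |
      ⟨h0, h1, h2', h3', h4, h5⟩ | ⟨h0, h1, h2', h3', h4, h5⟩ | ⟨h0, h1, h2', h3', h4, h5⟩ := key
  · exact Or.inl (by ext i; fin_cases i <;>
      simp [Finsupp.single_apply, h0, h1, h2', h3', h4, h5])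
  · exact Or.inr (Or.inl (by ext i; fin_cases i <;>
      simp [Finsupp.single_apply, h0, h1, h2', h3', h4, h5]))
  · exact Or.inr (Or.inr (Or.inl (by ext i; fin_cases i <;>
      simp [Finsupp.single_apply, h0, h1, h2', h3', h4, h5])))
  · exact Or.inr (Or.inr (Or.inr (Or.inl (by ext i; fin_cases i <;>
      simp [Finsupp.single_apply, h0, h1, h2', h3', h4, h5]))))
  · exact Or.inr (Or.inr (Or.inr (Or.inr (Or.inl (by ext i; fin_cases i <;>
      simp [Finsupp.single_apply, h0, h1, h2', h3', h4, h5])))))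
  · exact Or.inr (Or.inr (Or.inr (Or.inr (Or.inr (by ext i; fin_cases i <;>
      simp [Finsupp.single_apply, h0, h1, h2', h3', h4, h5])))))

lemma gen1 : (X 0 ^ 3 : MvPolynomial (Fin 6) ℂ) = monomial (Finsupp.single 0 3) 1 :=
  X_pow_eq_monomial ..

lemma gen_mul (i j : Fin 6) : (X i ^ 2 * X j : MvPolynomial (Fin 6) ℂ) =
    monomial (Finsupp.single i 2 + Finsupp.single j 1) 1 := by
  rw [X_pow_eq_monomial, X, monomial_mul, one_mul]

lemma w_single_mul (i j : Fin 6) :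
    w (Finsupp.single i 2 + Finsupp.single j 1) =
      2 * ![0, 1, 3, 4, 5, 9] i + ![0, 1, 3, 4, 5, 9] j := by
  rw [w_eq]
  fin_cases i <;> fin_cases j <;> simp [Finsupp.single_apply] <;> decide

/-- A homogeneous polynomial `f` of degree 3 satisfies `ψ(f) = f` if and only
if `f` lies in the `ℂ`-linear span of the six monomials
`x₀³, x₁²x₅, x₂²x₄, x₃²x₂, x₄²x₁, x₅²x₃`. -/
theorem invariant_cubics (f : MvPolynomial (Fin 6) ℂ) (hf : f.IsHomogeneous 3) :
    ψ f = f ↔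
      f ∈ Submodule.span ℂ
        ({X 0 ^ 3, X 1 ^ 2 * X 5, X 2 ^ 2 * X 4, X 3 ^ 2 * X 2,
          X 4 ^ 2 * X 1, X 5 ^ 2 * X 3} : Set (MvPolynomial (Fin 6) ℂ)) := by
  constructor
  · intro h
    nth_rewrite 1 [f.as_sum]
    refine Submodule.sum_mem _ fun d hd => ?_
    have hc : coeff d f ≠ 0 := mem_support_iff.mp hd
    have h3 : ∑ i, d i = 3 := by
      have := hf hc
      simpa [Finsupp.weight_apply, Finsupp.sum_fintype] using this
    have h11 : 11 ∣ w d := by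
      have hcoeff : ω ^ w d * coeff d f = coeff d f := by
        rw [← coeff_psi, h]
      have hone : ω ^ w d = 1 := mul_right_cancel₀ hc (by rw [hcoeff, one_mul])
      exact (omega_prim.pow_eq_one_iff_dvd _).mp hone
    have hmem : ∀ g ∈ ({X 0 ^ 3, X 1 ^ 2 * X 5, X 2 ^ 2 * X 4, X 3 ^ 2 * X 2,
          X 4 ^ 2 * X 1, X 5 ^ 2 * X 3} : Set (MvPolynomial (Fin 6) ℂ)),
        ∀ c : ℂ, c • g ∈ Submodule.span ℂ ({X 0 ^ 3, X 1 ^ 2 * X 5, X 2 ^ 2 * X 4, X 3 ^ 2 * X 2,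
          X 4 ^ 2 * X 1, X 5 ^ 2 * X 3} : Set (MvPolynomial (Fin 6) ℂ)) :=
      fun g hg c => Submodule.smul_mem _ _ (Submodule.subset_span hg)
    rcases classify d h3 h11 with h' | h' | h' | h' | h' | h' <;> subst h'
    · have e : (monomial (Finsupp.single 0 3)) (coeff (Finsupp.single 0 3) f)
          = coeff (Finsupp.single 0 3) f • (X 0 ^ 3 : MvPolynomial (Fin 6) ℂ) := by
        rw [gen1, smul_monomial, smul_eq_mul, mul_one]
      rw [e]
      exact hmem _ (by left; rfl) _
    · have e : (monomial (Finsupp.single 1 2 + Finsupp.single 5 1)) (coeff (Finsupp.single 1 2 + Finsupp.single 5 1) f)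
          = coeff (Finsupp.single 1 2 + Finsupp.single 5 1) f • (X 1 ^ 2 * X 5 : MvPolynomial (Fin 6) ℂ) := by
        rw [gen_mul, smul_monomial, smul_eq_mul, mul_one]
      rw [e]
      exact hmem _ (by right; left; rfl) _
    · have e : (monomial (Finsupp.single 2 2 + Finsupp.single 4 1)) (coeff (Finsupp.single 2 2 + Finsupp.single 4 1) f)
          = coeff (Finsupp.single 2 2 + Finsupp.single 4 1) f • (X 2 ^ 2 * X 4 : MvPolynomial (Fin 6) ℂ) := by
        rw [gen_mul, smul_monomial, smul_eq_mul, mul_one]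
      rw [e]
      exact hmem _ (by right; right; left; rfl) _
    · have e : (monomial (Finsupp.single 3 2 + Finsupp.single 2 1)) (coeff (Finsupp.single 3 2 + Finsupp.single 2 1) f)
          = coeff (Finsupp.single 3 2 + Finsupp.single 2 1) f • (X 3 ^ 2 * X 2 : MvPolynomial (Fin 6) ℂ) := by
        rw [gen_mul, smul_monomial, smul_eq_mul, mul_one]
      rw [e]
      exact hmem _ (by right; right; right; left; rfl) _
    · have e : (monomial (Finsupp.single 4 2 + Finsupp.single 1 1)) (coeff (Finsupp.single 4 2 + Finsupp.single 1 1) f)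
          = coeff (Finsupp.single 4 2 + Finsupp.single 1 1) f • (X 4 ^ 2 * X 1 : MvPolynomial (Fin 6) ℂ) := by
        rw [gen_mul, smul_monomial, smul_eq_mul, mul_one]
      rw [e]
      exact hmem _ (by right; right; right; right; left; rfl) _
    · have e : (monomial (Finsupp.single 5 2 + Finsupp.single 3 1)) (coeff (Finsupp.single 5 2 + Finsupp.single 3 1) f)
          = coeff (Finsupp.single 5 2 + Finsupp.single 3 1) f • (X 5 ^ 2 * X 3 : MvPolynomial (Fin 6) ℂ) := by
        rw [gen_mul, smul_monomial, smul_eq_mul, mul_one]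
      rw [e]
      exact hmem _ (by right; right; right; right; right; rfl) _
  · intro h
    clear hf
    have hgen : ∀ i j : Fin 6, 11 ∣ 2 * (![0, 1, 3, 4, 5, 9] i : ℕ) + ![0, 1, 3, 4, 5, 9] j →
        ψ (X i ^ 2 * X j : MvPolynomial (Fin 6) ℂ) = X i ^ 2 * X j := by
      intro i j hij
      have hone : ω ^ w (Finsupp.single i 2 + Finsupp.single j 1) = 1 := by
        rw [w_single_mul]
        exact (omega_prim.pow_eq_one_iff_dvd _).mpr hij
      rw [gen_mul, psi_monomial, hone, one_mul]
    induction h using Submodule.span_induction with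
    | mem g hg =>
      rcases hg with rfl | rfl | rfl | rfl | rfl | rfl
      · rw [gen1, psi_monomial]
        have h0 : w (Finsupp.single 0 3) = 0 := by rw [w_eq]; simp [Finsupp.single_apply]
        rw [h0, pow_zero, one_mul]
      · exact hgen 1 5 (by decide)
      · exact hgen 2 4 (by decide)
      · exact hgen 3 2 (by decide)
      · exact hgen 4 1 (by decide)
      · exact hgen 5 3 (by decide)
    | zero => simp
    | add a b _ _ ha hb => rw [map_add, ha, hb]
    | smul c a _ ha => rw [map_smul, ha]
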